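/- Let G be a graph on n vertices with average degree d > 16 such that G has no cycle of length at most ℓ for some even ℓ. Let A be the adjacency matrix of G and Γ = D + d·Id where D is the diagonal degree matrix. Then the spectral norm of Γ^{-1/2} A Γ^{-1/2} is strictly less than 2 n^{1/ℓ} / √d. -/

import Mathlib

open Matrix

/-- The spectral norm (ℓ2 → ℓ2 operator norm) of a real square matrix. -/
noncomputable def specNorm {m : Type*} [Fintype m] [DecidableEq m] (M : Matrix m m ℝ) : ℝ :=
  ‖LinearMap.toContinuousLinearMap (Matrix.toEuclideanLin M)‖

section CycleLemmas

open SimpleGraph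

variable {V : Type*} {G : SimpleGraph V}

/-- The edge joining the two endpoints of a path of length ≥ 2 is not among its edges. -/
lemma edge_ends_not_mem {u w : V} (q : G.Walk w u) (hq : q.IsPath) (h2 : 2 ≤ q.length) :
    s(u, w) ∉ q.edges := by
  cases q with
  | nil => simp
  | @cons _ x _ h r =>
    intro hmem
    rw [SimpleGraph.Walk.edges_cons, List.mem_cons] at hmem
    rw [SimpleGraph.Walk.cons_isPath_iff] at hq
    rcases hmem with h1 | h1
    · have h1' := Sym2.eq_iff.mp h1
      rcases h1' with ⟨hu, hw⟩ | ⟨hu, -⟩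
      · exact h.ne (hu ▸ hw)
      · subst hu
        have : r = SimpleGraph.Walk.nil := by
          have := SimpleGraph.Path.loop_eq ⟨r, hq.1⟩
          simpa using congrArg Subtype.val this
        subst this
        simp at h2
    · exact hq.2 (SimpleGraph.Walk.snd_mem_support_of_mem_edges r h1)

lemma exists_cycle_of_two_paths {v w : V} (p q : G.Walk v w) (hp : p.IsPath) (hq : q.IsPath)
    (hne : p ≠ q) :
    ∃ (u : V) (c : G.Walk u u), c.IsCycle ∧ c.length ≤ p.length + q.length := by
  classical
  set S : Set (Sym2 V) := {e | e ∈ p.edges ∨ e ∈ q.edges} with hS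
  set H := SimpleGraph.fromEdgeSet S with hH
  have hSG : ∀ e ∈ S, e ∈ G.edgeSet := by
    rintro e (he | he)
    · exact p.edges_subset_edgeSet he
    · exact q.edges_subset_edgeSet he
  have hHG : H ≤ G := by
    intro a b hab
    rw [hH, SimpleGraph.fromEdgeSet_adj] at hab
    exact (G.mem_edgeSet).mp (hSG _ hab.1)
  have hpe : ∀ e ∈ p.edges, e ∈ H.edgeSet := by
    intro e he
    rw [hH, SimpleGraph.edgeSet_fromEdgeSet]
    exact ⟨Or.inl he, SimpleGraph.not_isDiag_of_mem_edgeSet G (hSG e (Or.inl he))⟩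
  have hqe : ∀ e ∈ q.edges, e ∈ H.edgeSet := by
    intro e he
    rw [hH, SimpleGraph.edgeSet_fromEdgeSet]
    exact ⟨Or.inr he, SimpleGraph.not_isDiag_of_mem_edgeSet G (hSG e (Or.inr he))⟩
  have hne' : p.transfer H hpe ≠ q.transfer H hqe := by
    intro h
    apply hne
    have := congrArg (fun r : H.Walk v w =>
      r.transfer G (fun e he => hSG e ((SimpleGraph.edgeSet_fromEdgeSet S ▸
        r.edges_subset_edgeSet he).1))) h
    simpa [SimpleGraph.Walk.transfer_transfer, SimpleGraph.Walk.transfer_self] using this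
  have hnac : ¬ H.IsAcyclic := by
    intro hac
    exact hne' (congrArg Subtype.val
      (hac.path_unique ⟨p.transfer H hpe, hp.transfer _⟩ ⟨q.transfer H hqe, hq.transfer _⟩))
  unfold SimpleGraph.IsAcyclic at hnac
  push_neg at hnac
  obtain ⟨u, c, hc⟩ := hnac
  refine ⟨u, c.mapLe hHG, hc.mapLe hHG, ?_⟩
  have hlen : (c.mapLe hHG).length = c.length := SimpleGraph.Walk.length_map _ _
  rw [hlen]
  have hnd : c.edges.Nodup := hc.edges_nodup
  have hsub : c.edges ⊆ p.edges ++ q.edges := by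
    intro e he
    have := c.edges_subset_edgeSet he
    rw [hH, SimpleGraph.edgeSet_fromEdgeSet] at this
    rcases this.1 with h | h
    · exact List.mem_append_left _ h
    · exact List.mem_append_right _ h
  calc c.length = c.edges.length := (SimpleGraph.Walk.length_edges c).symm
    _ = c.edges.toFinset.card := (List.toFinset_card_of_nodup hnd).symm
    _ ≤ (p.edges ++ q.edges).toFinset.card := by
        apply Finset.card_le_card
        intro e he
        rw [List.mem_toFinset] at he ⊢
        exact hsub he
    _ ≤ (p.edges ++ q.edges).length := (p.edges ++ q.edges).toFinset_card_le
    _ = p.length + q.length := by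
        rw [List.length_append, SimpleGraph.Walk.length_edges, SimpleGraph.Walk.length_edges]

end CycleLemmas

section Counting

open SimpleGraph Finset

variable {V : Type*} [DecidableEq V]

/-- Iteratively extended paths ending at `v₀`, staying inside `t`. -/
def pathFinset (G : SimpleGraph V) [DecidableRel G.Adj] (t : Finset V) (v₀ : V) :
    ℕ → Finset ((u : V) × G.Walk u v₀)
  | 0 => {⟨v₀, SimpleGraph.Walk.nil⟩}
  | j+1 => (pathFinset G t v₀ j).biUnion fun x =>
      ((t.filter (fun y => G.Adj x.1 y)).erase (x.2.getVert 1)).attach.image fun u =>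
        ⟨u.1, SimpleGraph.Walk.cons
          (G.adj_symm (Finset.mem_filter.mp (Finset.mem_of_mem_erase u.2)).2) x.2⟩

lemma pathFinset_invariant {G : SimpleGraph V} [DecidableRel G.Adj] {t : Finset V} {v₀ : V}
    (hv₀ : v₀ ∈ t) {k : ℕ} (hk : 0 < k)
    (hgirth : ∀ (u : V) (c : G.Walk u u), c.IsCycle → 2 * k < c.length) :
    ∀ j, j ≤ k → ∀ x ∈ pathFinset G t v₀ j,
      x.2.IsPath ∧ x.2.length = j ∧ ∀ y ∈ x.2.support, y ∈ t := by
  intro j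
  induction j with
  | zero =>
    intro _ x hx
    simp only [pathFinset, Finset.mem_singleton] at hx
    subst hx
    simp [hv₀]
  | succ j ih =>
    intro hjk x hx
    simp only [pathFinset, Finset.mem_biUnion] at hx
    obtain ⟨y, hy, hx⟩ := hx
    rw [Finset.mem_image] at hx
    obtain ⟨u, _, rfl⟩ := hx
    obtain ⟨hpath, hlen, hsupp⟩ := ih (le_of_lt hjk) y hy
    have humem := u.2
    have hadj : G.Adj y.1 u.1 := (Finset.mem_filter.mp (Finset.mem_of_mem_erase humem)).2
    have hut : u.1 ∈ t := (Finset.mem_filter.mp (Finset.mem_of_mem_erase humem)).1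
    have hune : u.1 ≠ y.2.getVert 1 := Finset.ne_of_mem_erase humem
    -- key: u.1 ∉ y.2.support
    have hnotmem : u.1 ∉ y.2.support := by
      intro hu'
      have hq := hpath.takeUntil hu'
      rcases Nat.lt_or_ge (y.2.takeUntil u.1 hu').length 2 with hlt | hge
      · interval_cases hql : (y.2.takeUntil u.1 hu').length
        · exact hadj.ne (SimpleGraph.Walk.eq_of_length_eq_zero hql)
        · -- u.1 is the second vertex of y.2
          have h1 : ((y.2.takeUntil u.1 hu').append (y.2.dropUntil u.1 hu')).getVert 1
              = u.1 := by
            rw [SimpleGraph.Walk.getVert_append]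
            simp [hql]
          rw [y.2.take_spec hu'] at h1
          exact hune h1.symm
      · have hcyc := SimpleGraph.Path.cons_isCycle ⟨_, hq⟩ (G.adj_symm hadj)
          (edge_ends_not_mem _ hq hge)
        have hlc := hgirth _ _ hcyc
        have : (y.2.takeUntil u.1 hu').length ≤ j :=
          hlen ▸ SimpleGraph.Walk.length_takeUntil_le y.2 hu'
        simp only [SimpleGraph.Walk.length_cons] at hlc
        omega
    refine ⟨SimpleGraph.Walk.IsPath.cons hpath hnotmem, ?_, ?_⟩
    · simp [hlen]
    · intro z hz
      rw [SimpleGraph.Walk.support_cons, List.mem_cons] at hz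
      rcases hz with rfl | hz
      · exact hut
      · exact hsupp z hz

lemma pathFinset_card {G : SimpleGraph V} [DecidableRel G.Adj] {t : Finset V} {v₀ : V}
    (hv₀ : v₀ ∈ t) {k m : ℕ} (hk : 0 < k)
    (hdeg : ∀ v ∈ t, m ≤ (t.filter (fun y => G.Adj v y)).card)
    (hgirth : ∀ (u : V) (c : G.Walk u u), c.IsCycle → 2 * k < c.length) :
    ∀ j, j ≤ k → (m - 1) ^ j ≤ (pathFinset G t v₀ j).card := by
  intro j
  induction j with
  | zero => intro _; simp [pathFinset]
  | succ j ih =>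
    intro hjk
    have hcard : (pathFinset G t v₀ (j+1)).card
        = ∑ x ∈ pathFinset G t v₀ j,
          (((t.filter (fun y => G.Adj x.1 y)).erase (x.2.getVert 1)).attach.image
            (fun u => (⟨u.1, SimpleGraph.Walk.cons
              (G.adj_symm (Finset.mem_filter.mp (Finset.mem_of_mem_erase u.2)).2) x.2⟩ :
                (u : V) × G.Walk u v₀))).card := by
      apply Finset.card_biUnion
      intro x₁ hx₁ x₂ hx₂ hne
      rw [Function.onFun, Finset.disjoint_left]
      rintro z hz₁ hz₂
      rw [Finset.mem_image] at hz₁ hz₂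
      obtain ⟨u₁, _, rfl⟩ := hz₁
      obtain ⟨u₂, _, heq⟩ := hz₂
      apply hne
      obtain ⟨a₁, ha₁⟩ := u₁
      obtain ⟨a₂, ha₂⟩ := u₂
      obtain ⟨h1, h2⟩ := Sigma.mk.inj_iff.mp heq
      simp only at h1
      subst h1
      have h3 := eq_of_heq h2
      injection h3 with e1 e2 e3 e4
      exact Sigma.ext e2.symm e4.symm
    rw [hcard]
    have hstep : ∀ x ∈ pathFinset G t v₀ j,
        m - 1 ≤ (((t.filter (fun y => G.Adj x.1 y)).erase (x.2.getVert 1)).attach.image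
          (fun u => (⟨u.1, SimpleGraph.Walk.cons
            (G.adj_symm (Finset.mem_filter.mp (Finset.mem_of_mem_erase u.2)).2) x.2⟩ :
              (u : V) × G.Walk u v₀))).card := by
      intro x hx
      obtain ⟨hpath, hlen, hsupp⟩ :=
        pathFinset_invariant hv₀ hk hgirth j (le_of_lt hjk) x hx
      have hxt : x.1 ∈ t := hsupp _ x.2.start_mem_support
      rw [Finset.card_image_of_injective]
      · rw [Finset.card_attach]
        calc m - 1 ≤ (t.filter (fun y => G.Adj x.1 y)).card - 1 :=
              Nat.sub_le_sub_right (hdeg _ hxt) 1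
          _ ≤ _ := Finset.pred_card_le_card_erase
      · rintro u₁ u₂ h
        obtain ⟨h1, -⟩ := Sigma.mk.inj_iff.mp h
        exact Subtype.ext h1
    calc (m-1)^(j+1) = (m-1)^j * (m-1) := by ring
      _ ≤ (pathFinset G t v₀ j).card * (m-1) :=
          Nat.mul_le_mul_right _ (ih (le_of_lt hjk))
      _ = ∑ _x ∈ pathFinset G t v₀ j, (m-1) := by
          rw [Finset.sum_const, smul_eq_mul, Nat.mul_comm]
      _ ≤ _ := Finset.sum_le_sum hstep

lemma moore_count {G : SimpleGraph V} [Fintype V] [DecidableRel G.Adj] {t : Finset V} {v₀ : V}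
    (hv₀ : v₀ ∈ t) {k m : ℕ} (hk : 0 < k)
    (hdeg : ∀ v ∈ t, m ≤ (t.filter (fun y => G.Adj v y)).card)
    (hgirth : ∀ (u : V) (c : G.Walk u u), c.IsCycle → 2 * k < c.length) :
    (m - 1) ^ k ≤ Fintype.card V := by
  have hinj : Set.InjOn (fun x : (u : V) × G.Walk u v₀ => x.1)
      (pathFinset G t v₀ k : Set ((u : V) × G.Walk u v₀)) := by
    intro x₁ hx₁ x₂ hx₂ h1
    by_contra hne
    obtain ⟨u, p₁⟩ := x₁
    obtain ⟨u₂, p₂⟩ := x₂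
    simp only at h1
    subst h1
    have hp12 : p₁ ≠ p₂ := fun h => hne (by rw [h])
    obtain ⟨hpa₁, hl₁, -⟩ := pathFinset_invariant hv₀ hk hgirth k le_rfl _ hx₁
    obtain ⟨hpa₂, hl₂, -⟩ := pathFinset_invariant hv₀ hk hgirth k le_rfl _ hx₂
    obtain ⟨w, c, hc, hclen⟩ := exists_cycle_of_two_paths p₁ p₂ hpa₁ hpa₂ hp12
    have := hgirth _ _ hc
    simp only at hl₁ hl₂
    omega
  calc (m-1)^k ≤ (pathFinset G t v₀ k).card :=
        pathFinset_card hv₀ hk hdeg hgirth k le_rfl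
    _ = ((pathFinset G t v₀ k).image (fun x => x.1)).card :=
        (Finset.card_image_of_injOn hinj).symm
    _ ≤ Fintype.card V := Finset.card_le_univ _

end Counting

section MinDeg

open Finset

variable {V : Type*} [DecidableEq V] {G : SimpleGraph V} [DecidableRel G.Adj]

lemma exists_min_degree_subset (d : ℝ) (hd0 : 0 < d) (s : Finset V) :
    s.Nonempty → d * s.card ≤ ∑ v ∈ s, ((s.filter (fun y => G.Adj v y)).card : ℝ) →
    ∃ t, t ⊆ s ∧ t.Nonempty ∧
      ∀ v ∈ t, d / 2 ≤ ((t.filter (fun y => G.Adj v y)).card : ℝ) := by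
  induction s using Finset.strongInduction with
  | _ s ih =>
    intro hsne hinv
    by_cases hall : ∀ v ∈ s, d / 2 ≤ ((s.filter (fun y => G.Adj v y)).card : ℝ)
    · exact ⟨s, Finset.Subset.refl s, hsne, hall⟩
    push_neg at hall
    obtain ⟨v, hv, hvdeg⟩ := hall
    set s' := s.erase v with hs'
    have hss : s' ⊂ s := Finset.erase_ssubset hv
    have hins : insert v s' = s := Finset.insert_erase hv
    have hvs' : v ∉ s' := Finset.notMem_erase v s
    -- the degree identity
    have key : ∀ u ∈ s', ((s.filter (fun y => G.Adj u y)).card : ℕ)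
        = (s'.filter (fun y => G.Adj u y)).card + (if G.Adj u v then 1 else 0) := by
      intro u hu
      rw [← hins, Finset.filter_insert]
      split_ifs with h
      · rw [Finset.card_insert_of_notMem (fun hc => hvs' (Finset.mem_of_mem_filter _ hc))]
      · simp
    have keyv : (s.filter (fun y => G.Adj v y)).card = (s'.filter (fun y => G.Adj v y)).card := by
      rw [← hins, Finset.filter_insert, if_neg (G.irrefl)]
    have hsum : ∑ u ∈ s, ((s.filter (fun y => G.Adj u y)).card : ℝ)
        = 2 * ((s.filter (fun y => G.Adj v y)).card : ℝ)
          + ∑ u ∈ s', ((s'.filter (fun y => G.Adj u y)).card : ℝ) := by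
      rw [← Finset.add_sum_erase s _ hv, ← hs']
      have : ∑ u ∈ s', ((s.filter (fun y => G.Adj u y)).card : ℝ)
          = ∑ u ∈ s', (((s'.filter (fun y => G.Adj u y)).card : ℝ)
            + (if G.Adj u v then 1 else 0)) := by
        apply Finset.sum_congr rfl
        intro u hu
        have := key u hu
        push_cast [this]
        split_ifs <;> simp
      rw [this, Finset.sum_add_distrib]
      have hc : ∑ u ∈ s', (if G.Adj u v then (1:ℝ) else 0)
          = ((s'.filter (fun u => G.Adj u v)).card : ℝ) := by
        rw [Finset.sum_boole]
      have hcomm : (s'.filter (fun u => G.Adj u v)).card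
          = (s'.filter (fun y => G.Adj v y)).card := by
        congr 1
        apply Finset.filter_congr
        intro x _
        simp [SimpleGraph.adj_comm]
      rw [hc, hcomm, keyv]
      ring
    -- nonemptiness of s'
    rcases Finset.eq_empty_or_nonempty s' with hse | hs'ne
    · exfalso
      have hs1 : s = {v} := by rw [← hins, hse]; rfl
      rw [hs1] at hinv
      simp [Finset.filter_singleton, G.irrefl] at hinv
      linarith
    -- invariant for s'
    have hcard : ((s'.card : ℝ)) = (s.card : ℝ) - 1 := by
      rw [hs', Finset.cast_card_erase_of_mem hv]
    have hinv' : d * s'.card ≤ ∑ u ∈ s', ((s'.filter (fun y => G.Adj u y)).card : ℝ) := by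
      have h2 : ((s.filter (fun y => G.Adj v y)).card : ℝ) < d / 2 := hvdeg
      rw [hcard]
      nlinarith [hinv, hsum]
    obtain ⟨t, hts, htne, ht⟩ := ih s' hss hs'ne hinv'
    exact ⟨t, hts.trans hss.subset, htne, ht⟩

end MinDeg

lemma specNorm_le_of_schur {n : Type*} [Fintype n] [DecidableEq n] (M : Matrix n n ℝ)
    (hnn : ∀ i j, 0 ≤ M i j) (h : n → ℝ) (hh : ∀ i, 0 < h i) (c : ℝ) (hc : 0 ≤ c)
    (hrow : ∀ i, ∑ j, M i j * h j ≤ c * h i)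
    (hcol : ∀ j, ∑ i, M i j * h i ≤ c * h j) :
    specNorm M ≤ c := by
  apply ContinuousLinearMap.opNorm_le_bound _ hc
  intro x
  set y : n → ℝ := (WithLp.equiv 2 (n → ℝ)) x with hy
  have hnormx : ‖x‖ ^ 2 = ∑ j, y j ^ 2 := by
    rw [EuclideanSpace.norm_eq, Real.sq_sqrt (by positivity)]
    refine Finset.sum_congr rfl fun j _ => ?_
    rw [Real.norm_eq_abs, sq_abs]
    rfl
  have happly : ∀ i, (LinearMap.toContinuousLinearMap (Matrix.toEuclideanLin M) x :
      EuclideanSpace ℝ n) i = ∑ j, M i j * y j := by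
    intro i
    rfl
  have hnormT : ‖LinearMap.toContinuousLinearMap (Matrix.toEuclideanLin M) x‖ ^ 2
      = ∑ i, (∑ j, M i j * y j) ^ 2 := by
    rw [EuclideanSpace.norm_eq, Real.sq_sqrt (by positivity)]
    refine Finset.sum_congr rfl fun i _ => ?_
    rw [happly i, Real.norm_eq_abs, sq_abs]
  -- the row-wise Cauchy-Schwarz
  have hCS : ∀ i, (∑ j, M i j * y j) ^ 2
      ≤ (∑ j, M i j * h j) * (∑ j, M i j / h j * y j ^ 2) := by
    intro i
    have := Finset.sum_mul_sq_le_sq_mul_sq Finset.univ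
      (fun j => Real.sqrt (M i j * h j)) (fun j => Real.sqrt (M i j / h j) * y j)
    have e1 : ∀ j, Real.sqrt (M i j * h j) * (Real.sqrt (M i j / h j) * y j)
        = M i j * y j := by
      intro j
      rw [← mul_assoc, ← Real.sqrt_mul (mul_nonneg (hnn i j) (hh j).le)]
      have : M i j * h j * (M i j / h j) = (M i j) ^ 2 := by
        field_simp [(hh j).ne']
      rw [this, Real.sqrt_sq (hnn i j)]
    have e2 : ∀ j, Real.sqrt (M i j * h j) ^ 2 = M i j * h j := fun j =>
      Real.sq_sqrt (mul_nonneg (hnn i j) (hh j).le)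
    have e3 : ∀ j, (Real.sqrt (M i j / h j) * y j) ^ 2 = M i j / h j * y j ^ 2 := by
      intro j
      rw [mul_pow, Real.sq_sqrt (div_nonneg (hnn i j) (hh j).le)]
    simp only [e1, e2, e3] at this
    exact this
  have key : ∑ i, (∑ j, M i j * y j) ^ 2 ≤ c ^ 2 * ∑ j, y j ^ 2 := by
    calc ∑ i, (∑ j, M i j * y j) ^ 2
        ≤ ∑ i, (c * h i) * (∑ j, M i j / h j * y j ^ 2) := by
          apply Finset.sum_le_sum
          intro i _
          refine le_trans (hCS i) (mul_le_mul_of_nonneg_right (hrow i) ?_)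
          apply Finset.sum_nonneg
          intro j _
          exact mul_nonneg (div_nonneg (hnn i j) (hh j).le) (sq_nonneg _)
      _ = c * ∑ j, (y j ^ 2 / h j) * (∑ i, M i j * h i) := by
          calc ∑ i, (c * h i) * (∑ j, M i j / h j * y j ^ 2)
              = ∑ i, ∑ j, (c * h i) * (M i j / h j * y j ^ 2) := by
                refine Finset.sum_congr rfl fun i _ => Finset.mul_sum _ _ _
            _ = ∑ j, ∑ i, (c * h i) * (M i j / h j * y j ^ 2) := Finset.sum_comm
            _ = ∑ j, c * ((y j ^ 2 / h j) * (∑ i, M i j * h i)) := by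
                refine Finset.sum_congr rfl fun j _ => ?_
                rw [Finset.mul_sum, Finset.mul_sum]
                refine Finset.sum_congr rfl fun i _ => ?_
                field_simp [(hh j).ne']
            _ = c * ∑ j, (y j ^ 2 / h j) * (∑ i, M i j * h i) :=
                (Finset.mul_sum _ _ _).symm
      _ ≤ c * ∑ j, (y j ^ 2 / h j) * (c * h j) := by
          apply mul_le_mul_of_nonneg_left _ hc
          apply Finset.sum_le_sum
          intro j _
          exact mul_le_mul_of_nonneg_left (hcol j)
            (div_nonneg (sq_nonneg _) (hh j).le)
      _ = c ^ 2 * ∑ j, y j ^ 2 := by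
          rw [Finset.mul_sum, Finset.mul_sum]
          refine Finset.sum_congr rfl fun j _ => ?_
          field_simp [(hh j).ne']
  -- conclude
  have hfin : ‖LinearMap.toContinuousLinearMap (Matrix.toEuclideanLin M) x‖ ^ 2
      ≤ (c * ‖x‖) ^ 2 := by
    rw [hnormT, mul_pow, hnormx]
    exact key
  have h1 := Real.sqrt_le_sqrt hfin
  rwa [Real.sqrt_sq (norm_nonneg _), Real.sqrt_sq (by positivity)] at h1

/-- If `G` is a graph on `n` vertices with average degree `d > 16` and no cycle of length at
most `ℓ` (`ℓ` even), then writing `Γ = D + d·Id`, the spectral norm of `Γ^{-1/2} A Γ^{-1/2}`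
is strictly less than `2 n^{1/ℓ} / √d`. -/
theorem weak_moore_norm_bound (n ℓ : ℕ) (hn : 0 < n) (hℓeven : Even ℓ) (hℓpos : 0 < ℓ)
    (G : SimpleGraph (Fin n)) [DecidableRel G.Adj]
    (d : ℝ) (hd : d = (∑ v, (G.degree v : ℝ)) / n) (hd16 : 16 < d)
    (hgirth : ∀ (u : Fin n) (c : G.Walk u u), c.IsCycle → ℓ < c.length) :
    specNorm
      (Matrix.diagonal (fun v => ((G.degree v : ℝ) + d) ^ (-(1 / 2) : ℝ)) *
        G.adjMatrix ℝ *
        Matrix.diagonal (fun v => ((G.degree v : ℝ) + d) ^ (-(1 / 2) : ℝ)))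
      < 2 * (n : ℝ) ^ ((1 : ℝ) / ℓ) / Real.sqrt d := by
  classical
  have hd0 : (0:ℝ) < d := by linarith
  set g : Fin n → ℝ := fun v => ((G.degree v : ℝ) + d) ^ (-(1 / 2) : ℝ) with hg
  set h : Fin n → ℝ := fun v => ((G.degree v : ℝ) + d) ^ ((1 / 2) : ℝ) with hh
  have hbase : ∀ v : Fin n, (0:ℝ) < (G.degree v : ℝ) + d := fun v => by positivity
  have hgpos : ∀ v, 0 < g v := fun v => Real.rpow_pos_of_pos (hbase v) _
  have hhpos : ∀ v, 0 < h v := fun v => Real.rpow_pos_of_pos (hbase v) _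
  have hgh : ∀ v, g v * h v = 1 := by
    intro v
    rw [hg, hh]
    simp only
    rw [← Real.rpow_add (hbase v)]
    norm_num
  have hhg : ∀ v, h v = (((G.degree v : ℝ) + d)) * g v := by
    intro v
    rw [hg, hh]
    simp only
    nth_rewrite 2 [show ((G.degree v : ℝ) + d) = ((G.degree v : ℝ) + d) ^ (1:ℝ) by
      rw [Real.rpow_one]]
    rw [← Real.rpow_add (hbase v)]
    norm_num
  set M : Matrix (Fin n) (Fin n) ℝ :=
    Matrix.diagonal g * G.adjMatrix ℝ * Matrix.diagonal g with hM
  have hentry : ∀ u v, M u v = g u * (G.adjMatrix ℝ) u v * g v := by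
    intro u v
    rw [hM, Matrix.mul_diagonal, Matrix.diagonal_mul]
  have hAnn : ∀ u v, (0:ℝ) ≤ (G.adjMatrix ℝ) u v := by
    intro u v
    rw [SimpleGraph.adjMatrix_apply]
    split_ifs <;> norm_num
  have hnn : ∀ u v, 0 ≤ M u v := by
    intro u v
    rw [hentry]
    have h1 := hgpos u
    have h2 := hgpos v
    have h3 := hAnn u v
    positivity
  -- row sums of the adjacency matrix
  have hArow : ∀ u : Fin n, ∑ v, (G.adjMatrix ℝ) u v = (G.degree u : ℝ) := by
    intro u
    simp only [SimpleGraph.adjMatrix_apply]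
    rw [Finset.sum_boole, SimpleGraph.degree, SimpleGraph.neighborFinset_eq_filter]
  -- maximum degree and the Schur constant
  set Δ : ℕ := Finset.univ.sup (fun v => G.degree v) with hΔ
  have hdegΔ : ∀ v : Fin n, G.degree v ≤ Δ := fun v =>
    Finset.le_sup (f := fun v => G.degree v) (Finset.mem_univ v)
  have hΔd : (0:ℝ) < (Δ:ℝ) + d := by positivity
  set c : ℝ := (Δ : ℝ) / ((Δ : ℝ) + d) with hc
  have hc0 : 0 ≤ c := by positivity
  have hc1 : c < 1 := by
    rw [hc, div_lt_one hΔd]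
    linarith
  have hrow : ∀ u : Fin n, ∑ v, M u v * h v ≤ c * h u := by
    intro u
    have hterm : ∀ v : Fin n, M u v * h v = g u * (G.adjMatrix ℝ) u v := by
      intro v
      rw [hentry]
      calc g u * (G.adjMatrix ℝ) u v * g v * h v
          = g u * (G.adjMatrix ℝ) u v * (g v * h v) := by ring
        _ = g u * (G.adjMatrix ℝ) u v := by rw [hgh v, mul_one]
    calc ∑ v, M u v * h v = ∑ v, g u * (G.adjMatrix ℝ) u v :=
          Finset.sum_congr rfl fun v _ => hterm v
      _ = g u * (G.degree u : ℝ) := by rw [← Finset.mul_sum, hArow u]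
      _ ≤ c * h u := by
          rw [hhg u, hc]
          rw [div_mul_eq_mul_div, le_div_iff₀ hΔd]
          have h1 : (0:ℝ) ≤ g u := (hgpos u).le
          have h2 : (G.degree u : ℝ) ≤ (Δ : ℝ) := by exact_mod_cast hdegΔ u
          have key : (G.degree u : ℝ) * ((Δ:ℝ) + d) ≤ (Δ:ℝ) * ((G.degree u : ℝ) + d) := by
            nlinarith
          calc g u * (G.degree u : ℝ) * ((Δ:ℝ) + d)
              = g u * ((G.degree u : ℝ) * ((Δ:ℝ) + d)) := by ring
            _ ≤ g u * ((Δ:ℝ) * ((G.degree u : ℝ) + d)) :=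
                mul_le_mul_of_nonneg_left key h1
            _ = (Δ:ℝ) * (((G.degree u : ℝ) + d) * g u) := by ring
  have hAsymm : ∀ u v, (G.adjMatrix ℝ) u v = (G.adjMatrix ℝ) v u := by
    intro u v
    rw [SimpleGraph.adjMatrix_apply, SimpleGraph.adjMatrix_apply]
    simp only [G.adj_comm u v]
  have hMsymm : ∀ u v, M u v = M v u := by
    intro u v
    rw [hentry, hentry, hAsymm u v]
    ring
  have hcol : ∀ v : Fin n, ∑ u, M u v * h u ≤ c * h v := by
    intro v
    have : ∑ u, M u v * h u = ∑ u, M v u * h u :=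
      Finset.sum_congr rfl fun u _ => by rw [hMsymm u v]
    rw [this]
    exact hrow v
  -- the Schur bound
  have hnorm : specNorm M ≤ c := specNorm_le_of_schur M hnn h hhpos c hc0 hrow hcol
  -- Now the Moore-type lower bound on n
  obtain ⟨k, hkk⟩ := hℓeven
  have hkpos : 0 < k := by omega
  have hn1 : (1:ℝ) ≤ (n:ℝ) := by exact_mod_cast hn
  -- total degree sum
  have hsum : ∑ v, ((Finset.univ.filter (fun y => G.Adj v y)).card : ℝ) = d * n := by
    have : ∀ v : Fin n, ((Finset.univ.filter (fun y => G.Adj v y)).card : ℝ)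
        = (G.degree v : ℝ) := by
      intro v
      rw [SimpleGraph.degree, SimpleGraph.neighborFinset_eq_filter]
    rw [Finset.sum_congr rfl fun v _ => this v]
    rw [hd]
    field_simp
  have huniv : (Finset.univ : Finset (Fin n)).Nonempty := by
    rw [← Finset.card_pos, Finset.card_univ, Fintype.card_fin]
    exact hn
  obtain ⟨t, -, htne, ht⟩ := exists_min_degree_subset (G := G) d hd0 Finset.univ huniv
    (by rw [hsum, Finset.card_univ, Fintype.card_fin])
  -- integer minimum degree
  set m : ℕ := ⌈d / 2⌉₊ with hm
  have hdm : d / 2 ≤ (m:ℝ) := Nat.le_ceil _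
  have hm1 : 1 ≤ m := by
    by_contra hcon
    push_neg at hcon
    interval_cases m
    · simp at hdm; linarith
  have hdeg' : ∀ v ∈ t, m ≤ (t.filter (fun y => G.Adj v y)).card := by
    intro v hv
    rw [hm, Nat.ceil_le]
    exact ht v hv
  obtain ⟨v₀, hv₀⟩ := htne
  have hgirth' : ∀ (u : Fin n) (cc : G.Walk u u), cc.IsCycle → 2 * k < cc.length := by
    intro u cc hcc
    have := hgirth u cc hcc
    omega
  have hcount : (m - 1) ^ k ≤ n := by
    have := moore_count (G := G) hv₀ hkpos hdeg' hgirth'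
    rwa [Fintype.card_fin] at this
  -- real form of the count
  have hreal : (d / 4) ^ k ≤ (n : ℝ) := by
    have hmr : ((m - 1 : ℕ) : ℝ) = (m : ℝ) - 1 := by
      rw [Nat.cast_sub hm1, Nat.cast_one]
    have hb : d / 4 ≤ ((m - 1 : ℕ) : ℝ) := by
      rw [hmr]
      linarith
    calc (d/4)^k ≤ (((m - 1:ℕ):ℝ))^k := by
          apply pow_le_pow_left₀ (by linarith) hb
      _ = (((m-1)^k : ℕ) : ℝ) := by push_cast; ring
      _ ≤ (n:ℝ) := by exact_mod_cast hcount
  -- hence RHS ≥ 1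
  have hsqrtd : (0:ℝ) < Real.sqrt d := Real.sqrt_pos.mpr hd0
  have hrpow : Real.sqrt d / 2 ≤ (n : ℝ) ^ ((1:ℝ)/ℓ) := by
    have hd4 : (0:ℝ) ≤ d / 4 := by linarith
    have h1 : ((d/4) ^ k) ^ ((1:ℝ)/ℓ) ≤ (n:ℝ) ^ ((1:ℝ)/ℓ) := by
      apply Real.rpow_le_rpow (by positivity) hreal (by positivity)
    have h2 : ((d/4) ^ k : ℝ) ^ ((1:ℝ)/ℓ) = (d/4) ^ ((k:ℝ)/ℓ) := by
      rw [← Real.rpow_natCast (d/4) k, ← Real.rpow_mul hd4]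
      congr 1
      ring
    have h3 : ((k:ℝ)/ℓ) = 1/2 := by
      have : (ℓ:ℝ) = 2 * k := by
        rw [hkk]; push_cast; ring
      rw [this]
      have : (k:ℝ) ≠ 0 := by positivity
      field_simp
    have h4 : (d/4 : ℝ) ^ ((1:ℝ)/2) = Real.sqrt d / 2 := by
      rw [← Real.sqrt_eq_rpow, Real.sqrt_div hd0.le,
        show (4:ℝ) = 2^2 by norm_num, Real.sqrt_sq (by norm_num : (0:ℝ) ≤ 2)]
    rw [h2, h3, h4] at h1
    exact h1
  have hrhs : (1:ℝ) ≤ 2 * (n : ℝ) ^ ((1:ℝ)/ℓ) / Real.sqrt d := by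
    rw [le_div_iff₀ hsqrtd, one_mul]
    linarith
  calc specNorm M ≤ c := hnorm
    _ < 1 := hc1
    _ ≤ _ := hrhs
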